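/- For any n > 1, the number of antichains of subsets of {1,...,n} satisfies |AMT(1,n)| = Σ_{α ∈ AMT(1,n-1)} |[∅, α]|, i.e., the Dedekind-type number for n equals the sum over all antichains α on {1,...,n-1} of the number of antichains dominated by α (including the empty antichain). -/
import Mathlib


open Finset

/-- Families of finite subsets of ℕ. -/
abbrev Fam := Finset (Finset ℕ)

/-- `α` is an antichain of subsets of `N`: all members are subsets of `N`
and no member is a (proper) subset of another. -/
def IsAC (N : Finset ℕ) (α : Fam) : Prop :=
  (∀ A ∈ α, A ⊆ N) ∧ ∀ A ∈ α, ∀ B ∈ α, A ⊆ B → A = B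

instance (N : Finset ℕ) : DecidablePred (IsAC N) := fun α => by
  unfold IsAC; infer_instance

/-- The partial order on antichains: every member of `α` is contained in some member of `β`. -/
def amle (α β : Fam) : Prop := ∀ A ∈ α, ∃ B ∈ β, A ⊆ B

instance (α β : Fam) : Decidable (amle α β) := by
  unfold amle; infer_instance

/-- `sup` of a family: its maximal elements under inclusion. -/
def maxels (S : Fam) : Fam := S.filter (fun A => ∀ B ∈ S, A ⊆ B → A = B)

/-- The span of an antichain: the union of its members. -/
def sp (α : Fam) : Finset ℕ := α.sup id

/-- Join: maximal elements of the union. -/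
def joinAC (α β : Fam) : Fam := maxels (α ∪ β)

/-- Meet: maximal elements of the pairwise intersections. -/
def meetAC (α β : Fam) : Fam := maxels ((α ×ˢ β).image fun p => p.1 ∩ p.2)

/-- Projection onto `M`: maximal elements of {A ∩ M : A ∈ α}. -/
def proj (M : Finset ℕ) (α : Fam) : Fam := maxels (α.image (· ∩ M))

/-- External product. -/
def xprod (α β : Fam) : Fam :=
  maxels ((α ×ˢ β).image fun p => (p.1 \ sp β) ∪ (p.2 \ sp α) ∪ (p.1 ∩ p.2))

/-- The finite set of all antichains of subsets of `N`. -/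
def AMTf (N : Finset ℕ) : Finset Fam := N.powerset.powerset.filter (IsAC N)

/-- The interval `[a, b]` inside `AMTf N`, as a `Finset`. -/
def intervalF (N : Finset ℕ) (a b : Fam) : Finset Fam :=
  (AMTf N).filter (fun κ => amle a κ ∧ amle κ b)

/-- The interval `[a, b]` of antichains of subsets of `N`, as a `Set`. -/
def intervalSet (N : Finset ℕ) (a b : Fam) : Set Fam :=
  {κ | IsAC N κ ∧ amle a κ ∧ amle κ b}

/-- n-ary join of a family indexed by the members of `σ`. -/
def bigJoin (σ : Fam) (κ : Finset ℕ → Fam) : Fam := maxels (σ.sup κ)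

/-- n-ary external product of a family indexed by the members of `σ`. -/
noncomputable def bigX (σ : Fam) (κ : Finset ℕ → Fam) : Fam :=
  (σ.toList.map κ).foldr xprod {(∅ : Finset ℕ)}

/-- Nonempty antichains of subsets of `S` with span exactly `S`. -/
def Upsf (S : Finset ℕ) : Finset Fam :=
  S.powerset.powerset.filter (fun κ => IsAC S κ ∧ κ ≠ ∅ ∧ sp κ = S)

-- aux
lemma mem_AMTf {N : Finset ℕ} {α : Fam} : α ∈ AMTf N ↔ IsAC N α := by
  unfold AMTf
  rw [Finset.mem_filter, Finset.mem_powerset]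
  constructor
  · exact fun h => h.2
  · intro h
    exact ⟨fun A hA => Finset.mem_powerset.2 (h.1 A hA), h⟩

lemma mem_maxels {S : Fam} {A : Finset ℕ} :
    A ∈ maxels S ↔ A ∈ S ∧ ∀ B ∈ S, A ⊆ B → A = B := Finset.mem_filter

lemma exists_le_maxels {S : Fam} {B : Finset ℕ} (hB : B ∈ S) :
    ∃ C ∈ maxels S, B ⊆ C := by
  obtain ⟨C, hC, hmax⟩ := (S.filter (fun X => B ⊆ X)).exists_max_image Finset.card
    ⟨B, by simp [hB]⟩
  rw [Finset.mem_filter] at hC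
  refine ⟨C, mem_maxels.2 ⟨hC.1, fun D hD hCD => ?_⟩, hC.2⟩
  exact Finset.eq_of_subset_of_card_le hCD (hmax D (Finset.mem_filter.2 ⟨hD, hC.2.trans hCD⟩))

/-- forward maps -/
def toKappa (n : ℕ) (γ : Fam) : Fam := (γ.filter (fun A => n ∈ A)).image (fun A => A.erase n)
def toAlpha (n : ℕ) (γ : Fam) : Fam := maxels (γ.image (fun A => A.erase n))
def back (n : ℕ) (α κ : Fam) : Fam := (α \ κ) ∪ κ.image (insert n)

section Key
variable {n : ℕ} {M : Finset ℕ} (hn : n ∉ M)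

lemma toKappa_mem {γ : Fam} (hγ : IsAC (insert n M) γ) : IsAC M (toKappa n γ) := by
  constructor
  · rintro A hA
    simp only [toKappa, Finset.mem_image, Finset.mem_filter] at hA
    obtain ⟨C, ⟨hC, hnC⟩, rfl⟩ := hA
    intro x hx
    rw [Finset.mem_erase] at hx
    rcases Finset.mem_insert.1 (hγ.1 C hC hx.2) with h | h
    · exact absurd h hx.1
    · exact h
  · intro A hA B hB hAB
    simp only [toKappa, Finset.mem_image, Finset.mem_filter] at hA hB
    obtain ⟨C, ⟨hC, hnC⟩, rfl⟩ := hA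
    obtain ⟨D, ⟨hD, hnD⟩, rfl⟩ := hB
    have : C ⊆ D := by
      intro x hx
      by_cases hxn : x = n
      · subst hxn; exact hnD
      · have := hAB (Finset.mem_erase.2 ⟨hxn, hx⟩)
        exact (Finset.erase_subset n D) this
    rw [hγ.2 C hC D hD this]

lemma toAlpha_mem {γ : Fam} (hγ : IsAC (insert n M) γ) : IsAC M (toAlpha n γ) := by
  constructor
  · intro A hA
    have hA' := (mem_maxels.1 hA).1
    simp only [Finset.mem_image] at hA'
    obtain ⟨C, hC, rfl⟩ := hA'
    intro x hx
    rw [Finset.mem_erase] at hx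
    rcases Finset.mem_insert.1 (hγ.1 C hC hx.2) with h | h
    · exact absurd h hx.1
    · exact h
  · intro A hA B hB hAB
    exact (mem_maxels.1 hA).2 B (mem_maxels.1 hB).1 hAB

lemma toKappa_le_toAlpha {γ : Fam} : amle (toKappa n γ) (toAlpha n γ) := by
  intro A hA
  simp only [toKappa, Finset.mem_image, Finset.mem_filter] at hA
  obtain ⟨C, ⟨hC, hnC⟩, rfl⟩ := hA
  exact exists_le_maxels (Finset.mem_image.2 ⟨C, hC, rfl⟩)

include hn in
lemma notmem_of_isAC {α : Fam} (hα : IsAC M α) {A : Finset ℕ} (hA : A ∈ α) : n ∉ A :=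
  fun hc => hn (hα.1 A hA hc)

include hn in
lemma back_isAC {α κ : Fam} (hα : IsAC M α) (hκ : IsAC M κ) (hle : amle κ α) :
    IsAC (insert n M) (back n α κ) := by
  have hnα : ∀ A ∈ α, n ∉ A := fun A hA => notmem_of_isAC hn hα hA
  have hnκ : ∀ A ∈ κ, n ∉ A := fun A hA => notmem_of_isAC hn hκ hA
  constructor
  · intro A hA
    rcases Finset.mem_union.1 hA with h | h
    · exact (hα.1 A (Finset.mem_sdiff.1 h).1).trans (Finset.subset_insert n M)
    · obtain ⟨B, hB, rfl⟩ := Finset.mem_image.1 h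
      exact Finset.insert_subset_insert n (hκ.1 B hB)
  · intro A hA B hB hAB
    rcases Finset.mem_union.1 hA with h | h <;> rcases Finset.mem_union.1 hB with h' | h'
    · exact hα.2 A (Finset.mem_sdiff.1 h).1 B (Finset.mem_sdiff.1 h').1 hAB
    · -- A ∈ α \ κ, B = insert n B', A ⊆ insert n B' ⇒ A ⊆ B' ⇒ A ∈ κ, contra
      obtain ⟨B', hB', rfl⟩ := Finset.mem_image.1 h'
      rw [Finset.mem_sdiff] at h
      exfalso
      have hAB' : A ⊆ B' := fun x hx => by
        rcases Finset.mem_insert.1 (hAB hx) with hx' | hx'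
        · exact absurd hx' (fun hh => hnα A h.1 (hh ▸ hx))
        · exact hx'
      obtain ⟨A', hA', hBA'⟩ := hle B' hB'
      have : A = A' := hα.2 A h.1 A' hA' (hAB'.trans hBA')
      subst this
      have : B' = A := Finset.Subset.antisymm hBA' hAB'
      exact h.2 (this ▸ hB')
    · -- A = insert n A' ⊆ B ∈ α \ κ: impossible, n ∉ B
      obtain ⟨A', hA', rfl⟩ := Finset.mem_image.1 h
      exfalso
      exact hnα B (Finset.mem_sdiff.1 h').1 (hAB (Finset.mem_insert_self n A'))
    · obtain ⟨A', hA', rfl⟩ := Finset.mem_image.1 h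
      obtain ⟨B', hB', rfl⟩ := Finset.mem_image.1 h'
      have : A' ⊆ B' := by
        intro x hx
        rcases Finset.mem_insert.1 (hAB (Finset.mem_insert_of_mem hx)) with hx' | hx'
        · exact absurd hx' (fun hh => hnκ A' hA' (hh ▸ hx))
        · exact hx'
      rw [hκ.2 A' hA' B' hB' this]

include hn in
lemma toKappa_back {α κ : Fam} (hα : IsAC M α) (hκ : IsAC M κ) :
    toKappa n (back n α κ) = κ := by
  have hnα : ∀ A ∈ α, n ∉ A := fun A hA => notmem_of_isAC hn hα hA
  have hnκ : ∀ A ∈ κ, n ∉ A := fun A hA => notmem_of_isAC hn hκ hA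
  ext B
  simp only [toKappa, back, Finset.mem_image, Finset.mem_filter, Finset.mem_union,
    Finset.mem_sdiff]
  constructor
  · rintro ⟨C, ⟨hC, hnC⟩, rfl⟩
    rcases hC with h | h
    · exact absurd hnC (hnα C h.1)
    · obtain ⟨B', hB', rfl⟩ := h
      rwa [Finset.erase_insert (hnκ B' hB')]
  · intro hB
    exact ⟨insert n B, ⟨Or.inr ⟨B, hB, rfl⟩, Finset.mem_insert_self n B⟩,
      Finset.erase_insert (hnκ B hB)⟩

include hn in
lemma toAlpha_back {α κ : Fam} (hα : IsAC M α) (hκ : IsAC M κ) (hle : amle κ α) :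
    toAlpha n (back n α κ) = α := by
  have hnα : ∀ A ∈ α, n ∉ A := fun A hA => notmem_of_isAC hn hα hA
  have hnκ : ∀ A ∈ κ, n ∉ A := fun A hA => notmem_of_isAC hn hκ hA
  have himg : (back n α κ).image (fun A => A.erase n) = (α \ κ) ∪ κ := by
    ext B
    simp only [back, Finset.image_union, Finset.mem_union, Finset.mem_image]
    constructor
    · rintro (⟨C, hC, rfl⟩ | ⟨C, hC, rfl⟩)
      · rw [Finset.mem_sdiff] at hC
        left
        rw [Finset.erase_eq_of_notMem (hnα C hC.1)]
        exact Finset.mem_sdiff.2 hC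
      · obtain ⟨C', hC', rfl⟩ := hC
        right
        rwa [Finset.erase_insert (hnκ C' hC')]
    · rintro (h | h)
      · exact Or.inl ⟨B, h, Finset.erase_eq_of_notMem (hnα B (Finset.mem_sdiff.1 h).1)⟩
      · exact Or.inr ⟨insert n B, ⟨B, h, rfl⟩, Finset.erase_insert (hnκ B h)⟩
  rw [toAlpha, himg]
  -- maxels ((α \ κ) ∪ κ) = α
  ext C
  rw [mem_maxels]
  constructor
  · rintro ⟨hC, hmax⟩
    rcases Finset.mem_union.1 hC with h | h
    · exact (Finset.mem_sdiff.1 h).1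
    · obtain ⟨A', hA', hCA'⟩ := hle C h
      by_cases hA'κ : A' ∈ κ
      · exact (hκ.2 C h A' hA'κ hCA') ▸ hA'
      · have := hmax A' (Finset.mem_union_left _ (Finset.mem_sdiff.2 ⟨hA', hA'κ⟩)) hCA'
        exact this ▸ hA'
  · intro hC
    by_cases hCκ : C ∈ κ
    · refine ⟨Finset.mem_union_right _ hCκ, fun D hD hCD => ?_⟩
      rcases Finset.mem_union.1 hD with h | h
      · rw [Finset.mem_sdiff] at h
        exact hα.2 C hC D h.1 hCD
      · -- D ∈ κ, C ⊆ D, D ⊆ A' ∈ α, C ∈ α ⇒ C = A' ⇒ C = D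
        obtain ⟨A', hA', hDA'⟩ := hle D h
        have hCA' : C = A' := hα.2 C hC A' hA' (hCD.trans hDA')
        exact Finset.Subset.antisymm hCD (hCA' ▸ hDA')
    · refine ⟨Finset.mem_union_left _ (Finset.mem_sdiff.2 ⟨hC, hCκ⟩), fun D hD hCD => ?_⟩
      rcases Finset.mem_union.1 hD with h | h
      · exact hα.2 C hC D (Finset.mem_sdiff.1 h).1 hCD
      · obtain ⟨A', hA', hDA'⟩ := hle D h
        have hCA' : C = A' := hα.2 C hC A' hA' (hCD.trans hDA')
        exact Finset.Subset.antisymm hCD (hCA' ▸ hDA')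

lemma back_toAlpha_toKappa {γ : Fam} (hγ : IsAC (insert n M) γ) :
    back n (toAlpha n γ) (toKappa n γ) = γ := by
  have hγ0κ : ∀ A ∈ γ, n ∉ A → A ∉ toKappa n γ := by
    intro A hA hnA hc
    simp only [toKappa, Finset.mem_image, Finset.mem_filter] at hc
    obtain ⟨C, ⟨hC, hnC⟩, hCA⟩ := hc
    have : A ⊆ C := hCA ▸ (Finset.erase_subset n C)
    have := hγ.2 A hA C hC this
    exact hnA (this ▸ hnC)
  have hγ0max : ∀ A ∈ γ, n ∉ A → A ∈ toAlpha n γ := by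
    intro A hA hnA
    refine mem_maxels.2 ⟨Finset.mem_image.2 ⟨A, hA, Finset.erase_eq_of_notMem hnA⟩, ?_⟩
    intro D hD hAD
    obtain ⟨C, hC, rfl⟩ := Finset.mem_image.1 hD
    have : A ⊆ C := hAD.trans (Finset.erase_subset n C)
    have hAC : A = C := hγ.2 A hA C hC this
    subst hAC
    exact Finset.Subset.antisymm hAD (Finset.erase_subset n A)
  ext X
  simp only [back, Finset.mem_union, Finset.mem_sdiff]
  constructor
  · rintro (⟨hXα, hXκ⟩ | h)
    · obtain ⟨hXimg, -⟩ := mem_maxels.1 hXα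
      obtain ⟨C, hC, rfl⟩ := Finset.mem_image.1 hXimg
      by_cases hnC : n ∈ C
      · exact absurd (Finset.mem_image.2 ⟨C, Finset.mem_filter.2 ⟨hC, hnC⟩, rfl⟩) hXκ
      · rwa [Finset.erase_eq_of_notMem hnC]
    · obtain ⟨B, hB, rfl⟩ := Finset.mem_image.1 h
      obtain ⟨C, hC, rfl⟩ := Finset.mem_image.1 hB
      rw [Finset.mem_filter] at hC
      rw [Finset.insert_erase hC.2]
      exact hC.1
  · intro hX
    by_cases hnX : n ∈ X
    · exact Or.inr (Finset.mem_image.2 ⟨X.erase n,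
        Finset.mem_image.2 ⟨X, Finset.mem_filter.2 ⟨hX, hnX⟩, rfl⟩, Finset.insert_erase hnX⟩)
    · exact Or.inl ⟨hγ0max X hX hnX, hγ0κ X hX hnX⟩

include hn in
lemma key_card :
    (AMTf (insert n M)).card =
      ∑ α ∈ AMTf M, ((AMTf M).filter (fun κ => amle κ α)).card := by
  rw [← Finset.card_sigma]
  refine Finset.card_bij' (fun γ _ => ⟨toAlpha n γ, toKappa n γ⟩)
    (fun p _ => back n p.1 p.2) ?_ ?_ ?_ ?_
  · intro γ hγ
    rw [mem_AMTf] at hγ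
    exact Finset.mem_sigma.2 ⟨mem_AMTf.2 (toAlpha_mem hγ),
      Finset.mem_filter.2 ⟨mem_AMTf.2 (toKappa_mem hγ), toKappa_le_toAlpha⟩⟩
  · rintro ⟨α, κ⟩ hp
    rw [Finset.mem_sigma, Finset.mem_filter, mem_AMTf, mem_AMTf] at hp
    exact mem_AMTf.2 (back_isAC hn hp.1 hp.2.1 hp.2.2)
  · intro γ hγ
    exact back_toAlpha_toKappa (mem_AMTf.1 hγ)
  · rintro ⟨α, κ⟩ hp
    rw [Finset.mem_sigma, Finset.mem_filter, mem_AMTf, mem_AMTf] at hp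
    exact Sigma.ext (toAlpha_back hn hp.1 hp.2.1 hp.2.2)
      (heq_of_eq (toKappa_back hn hp.1 hp.2.1))

end Key


/-- one-element recursion for Dedekind-type numbers. -/
theorem one_element_recursion (n : ℕ) (h : 1 < n) :
    (AMTf (Finset.Icc 1 n)).card =
      ∑ α ∈ AMTf (Finset.Icc 1 (n - 1)),
        (intervalF (Finset.Icc 1 (n - 1)) (∅ : Fam) α).card := by
  have hamle : ∀ κ : Fam, amle ∅ κ := fun κ A hA => absurd hA (Finset.notMem_empty A)
  have hint : ∀ α : Fam, intervalF (Finset.Icc 1 (n - 1)) (∅ : Fam) α =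
      (AMTf (Finset.Icc 1 (n - 1))).filter (fun κ => amle κ α) := by
    intro α
    unfold intervalF
    exact Finset.filter_congr (fun κ _ => by simp [hamle κ])
  simp only [hint]
  have hN : Finset.Icc 1 n = insert n (Finset.Icc 1 (n - 1)) := by
    ext x
    simp only [Finset.mem_Icc, Finset.mem_insert]
    omega
  have hn : n ∉ Finset.Icc 1 (n - 1) := by
    simp only [Finset.mem_Icc]
    omega
  rw [hN]
  exact key_card hn
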